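/- Let F : [0,1] → [0,1] be a differentiable convex function with F(0) = 0 (the CDF of a p-value). Then for all a, b ∈ (0,1), we have (F(b) - F(ab)) / (b(1-a)) ≤ (F(1) - F(a)) / (1-a). -/
import Mathlib

/-- Lemma 1 (ADDIS): if `F : [0,1] → [0,1]` is a differentiable convex CDF with `F 0 = 0`,
then for all `a, b ∈ (0,1)`, `(F b - F (a*b)) / (b*(1-a)) ≤ (F 1 - F a) / (1-a)`. -/
theorem stmt_0 (F : ℝ → ℝ)
    (hmaps : ∀ t ∈ Set.Icc (0:ℝ) 1, F t ∈ Set.Icc (0:ℝ) 1)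
    (hdiff : DifferentiableOn ℝ F (Set.Icc (0:ℝ) 1))
    (hconv : ConvexOn ℝ (Set.Icc (0:ℝ) 1) F)
    (hF0 : F 0 = 0) :
    ∀ a ∈ Set.Ioo (0:ℝ) 1, ∀ b ∈ Set.Ioo (0:ℝ) 1,
      (F b - F (a * b)) / (b * (1 - a)) ≤ (F 1 - F a) / (1 - a) := by
  intro a ha b hb
  obtain ⟨ha0, ha1⟩ := ha
  obtain ⟨hb0, hb1⟩ := hb
  have hab0 : (0:ℝ) < a * b := mul_pos ha0 hb0
  have habb : a * b < b := by nlinarith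
  have haba : a * b < a := by nlinarith
  have hmemab : a * b ∈ Set.Icc (0:ℝ) 1 := ⟨le_of_lt hab0, by nlinarith⟩
  have hmemb : b ∈ Set.Icc (0:ℝ) 1 := ⟨le_of_lt hb0, le_of_lt hb1⟩
  have hmema : a ∈ Set.Icc (0:ℝ) 1 := ⟨le_of_lt ha0, le_of_lt ha1⟩
  have hmem1 : (1:ℝ) ∈ Set.Icc (0:ℝ) 1 := ⟨zero_le_one, le_refl 1⟩
  -- slope(ab, b) ≤ slope(ab, 1)
  have h1 : (F b - F (a * b)) / (b - a * b) ≤ (F 1 - F (a * b)) / (1 - a * b) :=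
    hconv.secant_mono hmemab hmemb hmem1 (ne_of_gt habb) (by nlinarith) (le_of_lt hb1)
  -- slope(ab, 1) ≤ slope(a, 1)
  have h2 : (F 1 - F (a * b)) / (1 - a * b) ≤ (F 1 - F a) / (1 - a) :=
    hconv.secant_mono_aux3 hmemab hmem1 haba ha1
  have : b - a * b = b * (1 - a) := by ring
  rw [this] at h1
  linarith
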